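/- Let (Ω, μ) be a σ-finite measure space and {Λ_ω ∈ B(H, H_ω) : ω ∈ Ω} a family with ω ↦ Λ_ω f strongly measurable for each f ∈ H, and K ∈ B(H). Then {Λ_ω} is a c-K-g-frame for H if and only if the synthesis operator T : (⊕_{ω∈Ω} H_ω, μ)_{L²} → H weakly defined by ⟨TF, g⟩ = ∫_Ω ⟨Λ_ω* F(ω), g⟩ dμ(ω) is bounded and R(K) ⊆ R(T). -/

import Mathlib

open MeasureTheory ContinuousLinearMap ENNReal NNReal

local notation "⟪" x ", " y "⟫" => @inner ℂ _ _ x y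

set_option linter.unusedSectionVars false
set_option maxHeartbeats 1000000

section Douglas

variable {G H H' : Type*} [NormedAddCommGroup G] [InnerProductSpace ℂ G] [CompleteSpace G]
  [NormedAddCommGroup H] [InnerProductSpace ℂ H] [CompleteSpace H]
  [NormedAddCommGroup H'] [InnerProductSpace ℂ H'] [CompleteSpace H']

/-- Easy direction of Douglas: majorization of adjoints gives range inclusion. -/
theorem douglas_range_le (K : H' →L[ℂ] H) (T : G →L[ℂ] H) (c : ℝ)
    (hc : ∀ f : H, ‖K.adjoint f‖ ≤ c * ‖T.adjoint f‖) :
    LinearMap.range (K : H' →ₗ[ℂ] H) ≤ LinearMap.range (T : G →ₗ[ℂ] H) := by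
  rintro _ ⟨x, rfl⟩
  -- well-definedness
  have hwd : ∀ f f' : H, T.adjoint f = T.adjoint f' → ⟪K x, f⟫ = ⟪K x, f'⟫ := by
    intro f f' hff
    have h0 : K.adjoint f = K.adjoint f' := by
      have h := hc (f - f')
      rw [_root_.map_sub, _root_.map_sub, hff, sub_self, norm_zero, mul_zero] at h
      exact sub_eq_zero.1 (norm_le_zero_iff.1 h)
    have : ⟪x, K.adjoint f⟫ = ⟪x, K.adjoint f'⟫ := by rw [h0]
    simpa [ContinuousLinearMap.adjoint_inner_right] using this
  set p : Submodule ℂ G := LinearMap.range (T.adjoint : H →ₗ[ℂ] G)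
  -- the functional on the range of T†
  have hex : ∀ u : p, ∃ f : H, T.adjoint f = (u : G) := fun u => u.2
  set φf : p → ℂ := fun u => ⟪K x, (hex u).choose⟫ with hφf
  have hφval : ∀ (u : p) (f : H), T.adjoint f = (u : G) → φf u = ⟪K x, f⟫ := by
    intro u f hf
    exact hwd _ _ ((hex u).choose_spec.trans hf.symm)
  have hadd : ∀ u v : p, φf (u + v) = φf u + φf v := by
    intro u v
    rw [hφval (u + v) ((hex u).choose + (hex v).choose)
      (by rw [map_add, (hex u).choose_spec, (hex v).choose_spec]; rfl), inner_add_right]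
  have hsmul : ∀ (a : ℂ) (u : p), φf (a • u) = a * φf u := by
    intro a u
    rw [hφval (a • u) (a • (hex u).choose)
      (by rw [ContinuousLinearMap.map_smul, (hex u).choose_spec]; rfl), inner_smul_right]
  set φ₀ : p →ₗ[ℂ] ℂ :=
    { toFun := φf, map_add' := hadd, map_smul' := hsmul }
  have hbound : ∀ u : p, ‖φ₀ u‖ ≤ (‖x‖ * c) * ‖u‖ := by
    intro u
    have h1 : φ₀ u = ⟪K x, (hex u).choose⟫ := rfl
    have h2 : ‖(⟪K x, (hex u).choose⟫ : ℂ)‖ = ‖(⟪x, K.adjoint ((hex u).choose)⟫ : ℂ)‖ := by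
      rw [ContinuousLinearMap.adjoint_inner_right]
    calc ‖φ₀ u‖ = ‖(⟪x, K.adjoint ((hex u).choose)⟫ : ℂ)‖ := by rw [h1, h2]
      _ ≤ ‖x‖ * ‖K.adjoint ((hex u).choose)‖ := norm_inner_le_norm _ _
      _ ≤ ‖x‖ * (c * ‖T.adjoint ((hex u).choose)‖) :=
          mul_le_mul_of_nonneg_left (hc _) (norm_nonneg x)
      _ = (‖x‖ * c) * ‖(u : G)‖ := by rw [(hex u).choose_spec]; ring
      _ = (‖x‖ * c) * ‖u‖ := rfl
  set φ : p →L[ℂ] ℂ := φ₀.mkContinuous (‖x‖ * c) hbound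
  obtain ⟨ψ, hψ, -⟩ := exists_extension_norm_eq p φ
  set z : G := (InnerProductSpace.toDual ℂ G).symm ψ
  refine ⟨z, ?_⟩
  apply ext_inner_right ℂ
  intro v
  have h1 : ⟪T z, v⟫ = ⟪z, T.adjoint v⟫ :=
    (ContinuousLinearMap.adjoint_inner_right T z v).symm
  have h2 : ⟪z, T.adjoint v⟫ = ψ (T.adjoint v) := InnerProductSpace.toDual_symm_apply
  have h3 : ψ (T.adjoint v) = φ ⟨T.adjoint v, LinearMap.mem_range_self _ v⟩ :=
    hψ ⟨T.adjoint v, LinearMap.mem_range_self _ v⟩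
  have h4 : φ (⟨T.adjoint v, LinearMap.mem_range_self _ v⟩ : p) = ⟪K x, v⟫ :=
    hφval _ v rfl
  show ⟪T z, v⟫ = ⟪K x, v⟫
  rw [h1, h2, h3, h4]

/-- Hard direction of Douglas: range inclusion yields a bounded factorization. -/
theorem douglas_factor (K : H' →L[ℂ] H) (T : G →L[ℂ] H)
    (hr : LinearMap.range (K : H' →ₗ[ℂ] H) ≤ LinearMap.range (T : G →ₗ[ℂ] H)) :
    ∃ S : H' →L[ℂ] G, T.comp S = K := by
  classical
  set N : Submodule ℂ G := (LinearMap.ker (T : G →ₗ[ℂ] H))ᗮ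
  have hker_closed : IsClosed ((LinearMap.ker (T : G →ₗ[ℂ] H) : Submodule ℂ G) : Set G) :=
    ContinuousLinearMap.isClosed_ker T
  haveI : CompleteSpace (LinearMap.ker (T : G →ₗ[ℂ] H) : Submodule ℂ G) := hker_closed.completeSpace_coe
  have huniq : ∀ x : H', ∃! u : G, u ∈ N ∧ T u = K x := by
    intro x
    obtain ⟨h, hh⟩ := hr (LinearMap.mem_range_self (K : H' →ₗ[ℂ] H) x)
    refine ⟨h - (Submodule.orthogonalProjection (LinearMap.ker (T : G →ₗ[ℂ] H)) h : G), ⟨?_, ?_⟩, ?_⟩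
    · exact Submodule.sub_starProjection_mem_orthogonal h
    · have hker : T ((Submodule.orthogonalProjection (LinearMap.ker (T : G →ₗ[ℂ] H)) h : G)) = 0 :=
        (Submodule.orthogonalProjection (LinearMap.ker (T : G →ₗ[ℂ] H)) h).2
      rw [map_sub, hker, sub_zero]; exact hh
    · rintro u ⟨huN, huT⟩
      have hmem : u - (h - (Submodule.orthogonalProjection (LinearMap.ker (T : G →ₗ[ℂ] H)) h : G)) ∈ N :=
        N.sub_mem huN (Submodule.sub_starProjection_mem_orthogonal h)
      have hmem2 : u - (h - (Submodule.orthogonalProjection (LinearMap.ker (T : G →ₗ[ℂ] H)) h : G)) ∈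
          LinearMap.ker (T : G →ₗ[ℂ] H) := by
        have hker : T ((Submodule.orthogonalProjection (LinearMap.ker (T : G →ₗ[ℂ] H)) h : G)) = 0 :=
          (Submodule.orthogonalProjection (LinearMap.ker (T : G →ₗ[ℂ] H)) h).2
        simp only [LinearMap.mem_ker, ContinuousLinearMap.coe_coe, map_sub, huT, hker, hh, sub_zero, sub_self]
      have := (Submodule.mem_orthogonal _ _).1 hmem _ hmem2
      rw [sub_eq_zero.1 (inner_self_eq_zero.1 this)]
  set Sf : H' → G := fun x => (huniq x).exists.choose with hSf
  have hSprop : ∀ x, Sf x ∈ N ∧ T (Sf x) = K x := fun x => (huniq x).exists.choose_spec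
  have hSuniq : ∀ x (u : G), u ∈ N → T u = K x → u = Sf x := fun x u h1 h2 =>
    ((huniq x).unique ⟨h1, h2⟩ ⟨(hSprop x).1, (hSprop x).2⟩)
  set S₀ : H' →ₗ[ℂ] G :=
    { toFun := Sf
      map_add' := fun x y => by
        refine (hSuniq (x + y) (Sf x + Sf y) (N.add_mem (hSprop x).1 (hSprop y).1) ?_).symm
        rw [map_add, (hSprop x).2, (hSprop y).2, map_add]
      map_smul' := fun a x => by
        refine (hSuniq (a • x) (a • Sf x) (N.smul_mem a (hSprop x).1) ?_).symm
        rw [ContinuousLinearMap.map_smul, (hSprop x).2, ContinuousLinearMap.map_smul] }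
  have hgraph : IsClosed (S₀.graph : Set (H' × G)) := by
    have : (S₀.graph : Set (H' × G)) =
        {q : H' × G | q.2 ∈ N} ∩ {q : H' × G | T q.2 = K q.1} := by
      ext q
      constructor
      · intro hq
        have h' : q.2 = Sf q.1 := (LinearMap.mem_graph_iff _ _).1 hq
        rw [Set.mem_inter_iff, Set.mem_setOf_eq, Set.mem_setOf_eq, h']
        exact ⟨(hSprop q.1).1, (hSprop q.1).2⟩
      · rintro ⟨h1, h2⟩
        exact (LinearMap.mem_graph_iff _ _).2 (hSuniq q.1 q.2 h1 h2)
    rw [this]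
    exact ((Submodule.isClosed_orthogonal _).preimage continuous_snd).inter
      (isClosed_eq (T.continuous.comp continuous_snd) (K.continuous.comp continuous_fst))
  have hcont : Continuous S₀ := S₀.continuous_of_isClosed_graph hgraph
  refine ⟨⟨S₀, hcont⟩, ?_⟩
  ext x
  exact (hSprop x).2

end Douglas

section Analysis

variable {H E Ω : Type*} [NormedAddCommGroup H] [InnerProductSpace ℂ H] [CompleteSpace H]
  [NormedAddCommGroup E] [InnerProductSpace ℂ E] [CompleteSpace E]
  [MeasurableSpace Ω] {μ : Measure Ω} [SigmaFinite μ]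
  {Λ : Ω → (H →L[ℂ] E)} {T : Lp E 2 μ →L[ℂ] H}

theorem synthesis_key
    (hT : ∀ (F : Lp E 2 μ) (g : H),
      ⟪T F, g⟫ = ∫ ω, ⟪(Λ ω).adjoint (F ω), g⟫ ∂μ)
    (F : Lp E 2 μ) (g : H) :
    ⟪F, T.adjoint g⟫ = ∫ ω, ⟪F ω, Λ ω g⟫ ∂μ := by
  rw [ContinuousLinearMap.adjoint_inner_right, hT]
  refine integral_congr_ae (Filter.Eventually.of_forall fun ω => ?_)
  exact ContinuousLinearMap.adjoint_inner_left (Λ ω) g (F ω)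

theorem synthesis_memL2
    (hmeas : ∀ f : H, StronglyMeasurable fun ω => Λ ω f)
    (hT : ∀ (F : Lp E 2 μ) (g : H),
      ⟪T F, g⟫ = ∫ ω, ⟪(Λ ω).adjoint (F ω), g⟫ ∂μ)
    (g : H) : MemLp (fun ω => Λ ω g) 2 μ := by
  classical
  set G : Ω → E := fun ω => Λ ω g with hG
  have hGsm : StronglyMeasurable G := hmeas g
  set h : Lp E 2 μ := T.adjoint g with hh
  set s : ℕ → Set Ω := fun n => {ω | ‖G ω‖ ≤ n} ∩ spanningSets μ n with hs
  have hsmeas : ∀ n, MeasurableSet (s n) := fun n =>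
    (measurableSet_le hGsm.norm.measurable measurable_const).inter
      (measurableSet_spanningSets μ n)
  have hsfin : ∀ n, μ (s n) < ⊤ := fun n =>
    (measure_mono Set.inter_subset_right).trans_lt (measure_spanningSets_lt_top μ n)
  have hsmono : Monotone s := by
    intro m n hmn
    refine Set.inter_subset_inter (fun ω hω => ?_) (monotone_spanningSets μ hmn)
    exact le_trans hω ((Nat.cast_le (α := ℝ)).2 hmn)
  have hsunion : ∀ ω, ∃ n, ω ∈ s n := by
    intro ω
    obtain ⟨m, hm⟩ : ∃ m, ω ∈ spanningSets μ m := by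
      have := iUnion_spanningSets μ
      have : ω ∈ ⋃ i, spanningSets μ i := by rw [this]; trivial
      exact Set.mem_iUnion.1 this
    obtain ⟨k, hk⟩ := exists_nat_ge (‖G ω‖)
    exact ⟨max k m, le_trans hk ((Nat.cast_le (α := ℝ)).2 (le_max_left _ _)),
      monotone_spanningSets μ (le_max_right k m) hm⟩
  -- the truncated fields
  have hGn : ∀ n : ℕ, MemLp ((s n).indicator G) 2 μ := by
    intro n
    rw [memLp_indicator_iff_restrict (hsmeas n)]
    haveI : IsFiniteMeasure (μ.restrict (s n)) :=
      ⟨by rw [Measure.restrict_apply_univ]; exact hsfin n⟩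
    refine MemLp.of_bound (hGsm.aestronglyMeasurable.restrict) n ?_
    exact (ae_restrict_iff' (hsmeas n)).2 (Filter.Eventually.of_forall fun ω hω => hω.1)
  set a : ℕ → ℝ := fun n => ∫ ω, ‖(s n).indicator G ω‖ ^ 2 ∂μ with ha
  have hanonneg : ∀ n, 0 ≤ a n := fun n =>
    integral_nonneg fun ω => sq_nonneg _
  have haint : ∀ n, Integrable (fun ω => ‖(s n).indicator G ω‖ ^ 2) μ := by
    intro n
    have h0 := (hGn n).integrable_norm_rpow (by norm_num) (by norm_num)
    refine h0.congr (Filter.Eventually.of_forall fun ω => ?_)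
    show ‖(s n).indicator G ω‖ ^ ((2 : ℝ≥0∞)).toReal = ‖(s n).indicator G ω‖ ^ 2
    rw [ENNReal.toReal_ofNat, Real.rpow_two]
  -- inner products computations
  have hptwise : ∀ n ω, (⟪(s n).indicator G ω, G ω⟫ : ℂ)
      = (RCLike.ofReal (‖(s n).indicator G ω‖ ^ 2) : ℂ) := by
    intro n ω
    by_cases hω : ω ∈ s n
    · simp only [Set.indicator_of_mem hω]
      rw [inner_self_eq_norm_sq_to_K, RCLike.ofReal_pow]
    · simp [Set.indicator_of_notMem hω]
  have hFn_inner_h : ∀ n, (⟪(hGn n).toLp _, h⟫ : ℂ) = (RCLike.ofReal (a n) : ℂ) := by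
    intro n
    rw [hh, synthesis_key hT]
    have : (fun ω => (⟪((hGn n).toLp _ : Lp E 2 μ) ω, G ω⟫ : ℂ))
        =ᵐ[μ] fun ω => (RCLike.ofReal (‖(s n).indicator G ω‖ ^ 2) : ℂ) := by
      filter_upwards [(hGn n).coeFn_toLp] with ω hω
      rw [hω, hptwise n ω]
    rw [integral_congr_ae this, integral_ofReal]
  have hFn_norm : ∀ n, ‖((hGn n).toLp _ : Lp E 2 μ)‖ ^ 2 = a n := by
    intro n
    have h1 : (⟪((hGn n).toLp _ : Lp E 2 μ), ((hGn n).toLp _ : Lp E 2 μ)⟫ : ℂ)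
        = (RCLike.ofReal (a n) : ℂ) := by
      rw [MeasureTheory.L2.inner_def]
      have : (fun ω => (⟪((hGn n).toLp _ : Lp E 2 μ) ω, ((hGn n).toLp _ : Lp E 2 μ) ω⟫ : ℂ))
          =ᵐ[μ] fun ω => (RCLike.ofReal (‖(s n).indicator G ω‖ ^ 2) : ℂ) := by
        filter_upwards [(hGn n).coeFn_toLp] with ω hω
        rw [hω, inner_self_eq_norm_sq_to_K, RCLike.ofReal_pow]
      rw [integral_congr_ae this, integral_ofReal]
    have h2 := inner_self_eq_norm_sq_to_K (𝕜 := ℂ) ((hGn n).toLp _ : Lp E 2 μ)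
    rw [h2] at h1
    refine (RCLike.ofReal_inj (K := ℂ)).1 ?_
    rw [RCLike.ofReal_pow, h1]
  have hbound : ∀ n, a n ≤ ‖h‖ ^ 2 := by
    intro n
    have h1 : ‖(⟪(hGn n).toLp _, h⟫ : ℂ)‖ ≤ ‖((hGn n).toLp _ : Lp E 2 μ)‖ * ‖h‖ :=
      norm_inner_le_norm _ _
    rw [hFn_inner_h n] at h1
    have h2 : ‖(RCLike.ofReal (a n) : ℂ)‖ = a n := by
      rw [RCLike.norm_ofReal, abs_of_nonneg (hanonneg n)]
    rw [h2] at h1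
    nlinarith [hFn_norm n, norm_nonneg ((hGn n).toLp _ : Lp E 2 μ), norm_nonneg h, hanonneg n]
  -- pass to lintegral
  have hlin : ∀ n, (∫⁻ ω, (s n).indicator (fun ω => (‖G ω‖₊ : ℝ≥0∞) ^ 2) ω ∂μ)
      = ENNReal.ofReal (a n) := by
    intro n
    rw [ofReal_integral_eq_lintegral_ofReal (haint n)
      (Filter.Eventually.of_forall fun ω => sq_nonneg _)]
    refine lintegral_congr fun ω => ?_
    by_cases hω : ω ∈ s n
    · simp only [Set.indicator_of_mem hω]
      rw [← enorm_eq_nnnorm, ← ofReal_norm, ← ENNReal.ofReal_pow (norm_nonneg _)]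
    · simp [Set.indicator_of_notMem hω]
  have hmeas2 : Measurable fun ω => (‖G ω‖₊ : ℝ≥0∞) ^ 2 := hGsm.enorm.pow_const 2
  have hsup : (∫⁻ ω, (‖G ω‖₊ : ℝ≥0∞) ^ 2 ∂μ) ≤ ENNReal.ofReal (‖h‖ ^ 2) := by
    have hmono : Monotone fun n => (s n).indicator fun ω => (‖G ω‖₊ : ℝ≥0∞) ^ 2 := by
      intro m n hmn
      exact Set.indicator_le_indicator_of_subset (hsmono hmn) (fun ω => zero_le)
    have hsup_eq : (fun ω => ⨆ n, (s n).indicator (fun ω => (‖G ω‖₊ : ℝ≥0∞) ^ 2) ω)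
        = fun ω => (‖G ω‖₊ : ℝ≥0∞) ^ 2 := by
      funext ω
      refine le_antisymm (iSup_le fun n => Set.indicator_le_self _ _ ω) ?_
      obtain ⟨n, hn⟩ := hsunion ω
      exact le_trans
        (le_of_eq (Set.indicator_of_mem hn (fun ω => (‖G ω‖₊ : ℝ≥0∞) ^ 2)).symm)
        (le_iSup (fun n => (s n).indicator (fun ω => (‖G ω‖₊ : ℝ≥0∞) ^ 2) ω) n)
    calc (∫⁻ ω, (‖G ω‖₊ : ℝ≥0∞) ^ 2 ∂μ)
        = ∫⁻ ω, ⨆ n, (s n).indicator (fun ω => (‖G ω‖₊ : ℝ≥0∞) ^ 2) ω ∂μ := by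
          rw [hsup_eq]
      _ = ⨆ n, ∫⁻ ω, (s n).indicator (fun ω => (‖G ω‖₊ : ℝ≥0∞) ^ 2) ω ∂μ :=
          lintegral_iSup (fun n => hmeas2.indicator (hsmeas n)) hmono
      _ ≤ ENNReal.ofReal (‖h‖ ^ 2) := by
          refine iSup_le fun n => ?_
          rw [hlin n]
          exact ENNReal.ofReal_le_ofReal (hbound n)
  refine ⟨hGsm.aestronglyMeasurable, ?_⟩
  rw [eLpNorm_eq_lintegral_rpow_enorm_toReal (by norm_num) (by norm_num), ENNReal.toReal_ofNat]
  refine ENNReal.rpow_lt_top_of_nonneg (by norm_num) ?_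
  refine ne_of_lt (lt_of_le_of_lt (le_of_eq (lintegral_congr fun ω => ?_))
    (lt_of_le_of_lt hsup ENNReal.ofReal_lt_top))
  rw [ENNReal.rpow_two, enorm_eq_nnnorm]


theorem synthesis_integral_eq
    (hmeas : ∀ f : H, StronglyMeasurable fun ω => Λ ω f)
    (hT : ∀ (F : Lp E 2 μ) (g : H),
      ⟪T F, g⟫ = ∫ ω, ⟪(Λ ω).adjoint (F ω), g⟫ ∂μ)
    (g : H) : ∫ ω, ‖Λ ω g‖ ^ 2 ∂μ = ‖T.adjoint g‖ ^ 2 := by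
  have hG := synthesis_memL2 hmeas hT g
  set Y : Lp E 2 μ := hG.toLp _ with hY
  have hTG : T.adjoint g = Y := by
    apply ext_inner_left ℂ
    intro F
    rw [synthesis_key hT, MeasureTheory.L2.inner_def]
    refine integral_congr_ae ?_
    filter_upwards [hG.coeFn_toLp] with ω hω
    rw [hω]
  have h1 : (⟪Y, Y⟫ : ℂ) = RCLike.ofReal (∫ ω, ‖Λ ω g‖ ^ 2 ∂μ) := by
    rw [MeasureTheory.L2.inner_def]
    have h0 : (fun ω => (⟪Y ω, Y ω⟫ : ℂ))
        =ᵐ[μ] fun ω => (RCLike.ofReal (‖Λ ω g‖ ^ 2) : ℂ) := by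
      filter_upwards [hG.coeFn_toLp] with ω hω
      rw [hω, inner_self_eq_norm_sq_to_K, RCLike.ofReal_pow]
    rw [integral_congr_ae h0, integral_ofReal]
  rw [hTG]
  have h2 := inner_self_eq_norm_sq_to_K (𝕜 := ℂ) Y
  rw [h2] at h1
  refine (RCLike.ofReal_inj (K := ℂ)).1 ?_
  rw [RCLike.ofReal_pow, ← h1]

end Analysis


/-- `{Λ_ω}` is a c-K-g-frame iff the (bounded) synthesis operator `T` on the
direct-integral space satisfies `R(K) ⊆ R(T)`. -/
theorem cKg_frame_iff_range_inclusion
    {H E Ω : Type*} [NormedAddCommGroup H] [InnerProductSpace ℂ H] [CompleteSpace H]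
    [NormedAddCommGroup E] [InnerProductSpace ℂ E] [CompleteSpace E]
    [MeasurableSpace Ω] (μ : Measure Ω) [SigmaFinite μ]
    (K : H →L[ℂ] H) (Λ : Ω → (H →L[ℂ] E))
    (hmeas : ∀ f : H, StronglyMeasurable fun ω => Λ ω f)
    (T : Lp E 2 μ →L[ℂ] H)
    (hT : ∀ (F : Lp E 2 μ) (g : H),
      ⟪T F, g⟫ = ∫ ω, ⟪(Λ ω).adjoint (F ω), g⟫ ∂μ) :
    (∃ A B : ℝ, 0 < A ∧ A ≤ B ∧ ∀ f : H,
        A * ‖K.adjoint f‖ ^ 2 ≤ ∫ ω, ‖Λ ω f‖ ^ 2 ∂μ ∧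
        ∫ ω, ‖Λ ω f‖ ^ 2 ∂μ ≤ B * ‖f‖ ^ 2) ↔
    (LinearMap.range (K : H →ₗ[ℂ] H) ≤ LinearMap.range (T : Lp E 2 μ →ₗ[ℂ] H)) := by
  have hint : ∀ f : H, ∫ ω, ‖Λ ω f‖ ^ 2 ∂μ = ‖T.adjoint f‖ ^ 2 :=
    synthesis_integral_eq hmeas hT
  constructor
  · rintro ⟨A, B, hA, hAB, hfr⟩
    refine douglas_range_le K T ((Real.sqrt A)⁻¹) fun f => ?_
    have h1 := (hfr f).1
    rw [hint f] at h1
    have hA' : 0 < Real.sqrt A := Real.sqrt_pos.2 hA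
    have e1 : Real.sqrt (A * ‖K.adjoint f‖ ^ 2) = Real.sqrt A * ‖K.adjoint f‖ := by
      rw [Real.sqrt_mul (le_of_lt hA), Real.sqrt_sq (norm_nonneg _)]
    have e2 : Real.sqrt (‖T.adjoint f‖ ^ 2) = ‖T.adjoint f‖ := Real.sqrt_sq (norm_nonneg _)
    have h2 := Real.sqrt_le_sqrt h1
    rw [e1, e2] at h2
    calc ‖K.adjoint f‖ = (Real.sqrt A)⁻¹ * (Real.sqrt A * ‖K.adjoint f‖) := by
          field_simp
      _ ≤ (Real.sqrt A)⁻¹ * ‖T.adjoint f‖ :=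
          mul_le_mul_of_nonneg_left h2 (inv_nonneg.2 hA'.le)
  · intro hr
    obtain ⟨S, hS⟩ := douglas_factor K T hr
    set c : ℝ := ‖S.adjoint‖ with hc
    have hc0 : 0 ≤ c := norm_nonneg _
    have hlow : ∀ f, ‖K.adjoint f‖ ≤ c * ‖T.adjoint f‖ := by
      intro f
      have h0 : K.adjoint f = S.adjoint (T.adjoint f) := by
        rw [← hS, ContinuousLinearMap.adjoint_comp]; rfl
      rw [h0]
      exact S.adjoint.le_opNorm _
    refine ⟨(c ^ 2 + 1)⁻¹, max (‖T.adjoint‖ ^ 2) ((c ^ 2 + 1)⁻¹), by positivity,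
      le_max_right _ _, fun f => ?_⟩
    constructor
    · rw [hint f]
      have h2 : ‖K.adjoint f‖ ^ 2 ≤ (c ^ 2 + 1) * ‖T.adjoint f‖ ^ 2 := by
        nlinarith [hlow f, norm_nonneg (K.adjoint f), norm_nonneg (T.adjoint f)]
      have h3 : (c ^ 2 + 1)⁻¹ * ‖K.adjoint f‖ ^ 2
          ≤ (c ^ 2 + 1)⁻¹ * ((c ^ 2 + 1) * ‖T.adjoint f‖ ^ 2) :=
        mul_le_mul_of_nonneg_left h2 (by positivity)
      calc (c ^ 2 + 1)⁻¹ * ‖K.adjoint f‖ ^ 2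
          ≤ (c ^ 2 + 1)⁻¹ * ((c ^ 2 + 1) * ‖T.adjoint f‖ ^ 2) := h3
        _ = ‖T.adjoint f‖ ^ 2 := by
            rw [← mul_assoc, inv_mul_cancel₀ (by positivity), one_mul]
    · rw [hint f]
      calc ‖T.adjoint f‖ ^ 2 ≤ (‖T.adjoint‖ * ‖f‖) ^ 2 := by
            have h4 := T.adjoint.le_opNorm f
            have h5 : (0:ℝ) ≤ ‖T.adjoint‖ * ‖f‖ := by positivity
            nlinarith [norm_nonneg (T.adjoint f)]
        _ = ‖T.adjoint‖ ^ 2 * ‖f‖ ^ 2 := by ring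
        _ ≤ max (‖T.adjoint‖ ^ 2) ((c ^ 2 + 1)⁻¹) * ‖f‖ ^ 2 :=
            mul_le_mul_of_nonneg_right (le_max_left _ _) (sq_nonneg _)
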